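/- Let k ≥ 1 and let (x_i, y_i, z_i), i = 1, …, k, be triples of variables from a set X; let t, f, c_1, …, c_{k+1} be pairwise distinct additional variables not belonging to X. For each i let δ_i^1 be the equality-term with literals {x_i, ¬y_i, ¬z_i, t, ¬f} and equality (c_i, c_{i+1}); let δ_i^2 have literals {¬x_i, y_i, ¬z_i, t, ¬f} and equality (c_i, c_{i+1}); let δ_i^3 have literals {¬x_i, ¬y_i, z_i, t, ¬f} and equality (c_i, c_{i+1}). Let Δ = {δ_i^j : 1 ≤ i ≤ k, 1 ≤ j ≤ 3} and let α be the equality-term with literals {t, ¬f} and equality (c_1, c_{k+1}). Then there exists an assignment σ : X → Bool such that for every i exactly one of σ(x_i), σ(y_i), σ(z_i) equals true, if and only if there exists a consistent subset Φ ⊆ Δ with Φ ⊨ α. (This is the correctness of the reduction from Pos-1-In-3-SAT used to prove para-NP-hardness of p-ARG.) -/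

import Mathlib

/-- An equality-term over variables `W`: a finite set of literals
(`Sum.inl w` positive, `Sum.inr w` negative) together with a finite set of
equalities between variables. -/
abbrev EqTerm (W : Type) := Finset (W ⊕ W) × Finset (W × W)

/-- An assignment satisfies a literal. -/
def satLit {W : Type} (σ : W → Bool) : W ⊕ W → Prop
  | Sum.inl w => σ w = true
  | Sum.inr w => σ w = false

/-- An assignment satisfies an equality-term if it satisfies every literal and
every equality of it. -/
def satEqTerm {W : Type} (σ : W → Bool) (φ : EqTerm W) : Prop :=
  (∀ l ∈ φ.1, satLit σ l) ∧ (∀ p ∈ φ.2, σ p.1 = σ p.2)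

/-- A set of equality-terms is consistent if some assignment satisfies all members. -/
def ConsistentE {W : Type} (Φ : Set (EqTerm W)) : Prop := ∃ σ, ∀ φ ∈ Φ, satEqTerm σ φ

/-- `Φ ⊨ α`: every assignment satisfying all members of `Φ` satisfies `α`. -/
def EntailsE {W : Type} (Φ : Set (EqTerm W)) (α : EqTerm W) : Prop :=
  ∀ σ, (∀ φ ∈ Φ, satEqTerm σ φ) → satEqTerm σ α

/-- The variable type of the reduction: the original variables `X` together
with the fresh, pairwise distinct variables `t, f` (the type `Fin 2`) and
`c_1, …, c_{k+1}` (the type `Fin (k+1)`). -/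
abbrev RedVar (X : Type) (k : ℕ) := X ⊕ (Fin 2 ⊕ Fin (k + 1))

/-- The variable `t`. -/
def tv (X : Type) (k : ℕ) : RedVar X k := Sum.inr (Sum.inl 0)

/-- The variable `f`. -/
def fv (X : Type) (k : ℕ) : RedVar X k := Sum.inr (Sum.inl 1)

/-- The variable `c_{i+1}` for `i : Fin (k+1)` (so `c_1, …, c_{k+1}`). -/
def cv (X : Type) (k : ℕ) (i : Fin (k + 1)) : RedVar X k := Sum.inr (Sum.inr i)

/-- `δ_i^1`: literals `{x_i, ¬y_i, ¬z_i, t, ¬f}` and equality `(c_i, c_{i+1})`. -/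
def delta1 {X : Type} [DecidableEq X] {k : ℕ} (x y z : Fin k → X) (i : Fin k) :
    EqTerm (RedVar X k) :=
  ({Sum.inl (Sum.inl (x i)), Sum.inr (Sum.inl (y i)), Sum.inr (Sum.inl (z i)),
    Sum.inl (tv X k), Sum.inr (fv X k)},
   {(cv X k i.castSucc, cv X k i.succ)})

/-- `δ_i^2`: literals `{¬x_i, y_i, ¬z_i, t, ¬f}` and equality `(c_i, c_{i+1})`. -/
def delta2 {X : Type} [DecidableEq X] {k : ℕ} (x y z : Fin k → X) (i : Fin k) :
    EqTerm (RedVar X k) :=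
  ({Sum.inr (Sum.inl (x i)), Sum.inl (Sum.inl (y i)), Sum.inr (Sum.inl (z i)),
    Sum.inl (tv X k), Sum.inr (fv X k)},
   {(cv X k i.castSucc, cv X k i.succ)})

/-- `δ_i^3`: literals `{¬x_i, ¬y_i, z_i, t, ¬f}` and equality `(c_i, c_{i+1})`. -/
def delta3 {X : Type} [DecidableEq X] {k : ℕ} (x y z : Fin k → X) (i : Fin k) :
    EqTerm (RedVar X k) :=
  ({Sum.inr (Sum.inl (x i)), Sum.inr (Sum.inl (y i)), Sum.inl (Sum.inl (z i)),
    Sum.inl (tv X k), Sum.inr (fv X k)},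
   {(cv X k i.castSucc, cv X k i.succ)})

/-- The knowledge-base `Δ = {δ_i^j : 1 ≤ i ≤ k, 1 ≤ j ≤ 3}`. -/
def redDelta {X : Type} [DecidableEq X] {k : ℕ} (x y z : Fin k → X) :
    Set (EqTerm (RedVar X k)) :=
  {φ | ∃ i, φ = delta1 x y z i ∨ φ = delta2 x y z i ∨ φ = delta3 x y z i}

/-- The claim `α`: literals `{t, ¬f}` and equality `(c_1, c_{k+1})`. -/
def redAlpha (X : Type) [DecidableEq X] (k : ℕ) : EqTerm (RedVar X k) :=
  ({Sum.inl (tv X k), Sum.inr (fv X k)}, {(cv X k 0, cv X k (Fin.last k))})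

lemma sat_delta1_iff {X : Type} [DecidableEq X] {k : ℕ} (x y z : Fin k → X)
    (σ : RedVar X k → Bool) (i : Fin k) :
    satEqTerm σ (delta1 x y z i) ↔
      (σ (Sum.inl (x i)) = true ∧ σ (Sum.inl (y i)) = false ∧ σ (Sum.inl (z i)) = false ∧
       σ (tv X k) = true ∧ σ (fv X k) = false) ∧
      σ (cv X k i.castSucc) = σ (cv X k i.succ) := by
  simp [delta1, satEqTerm, satLit]

lemma sat_delta2_iff {X : Type} [DecidableEq X] {k : ℕ} (x y z : Fin k → X)
    (σ : RedVar X k → Bool) (i : Fin k) :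
    satEqTerm σ (delta2 x y z i) ↔
      (σ (Sum.inl (x i)) = false ∧ σ (Sum.inl (y i)) = true ∧ σ (Sum.inl (z i)) = false ∧
       σ (tv X k) = true ∧ σ (fv X k) = false) ∧
      σ (cv X k i.castSucc) = σ (cv X k i.succ) := by
  simp [delta2, satEqTerm, satLit]

lemma sat_delta3_iff {X : Type} [DecidableEq X] {k : ℕ} (x y z : Fin k → X)
    (σ : RedVar X k → Bool) (i : Fin k) :
    satEqTerm σ (delta3 x y z i) ↔
      (σ (Sum.inl (x i)) = false ∧ σ (Sum.inl (y i)) = false ∧ σ (Sum.inl (z i)) = true ∧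
       σ (tv X k) = true ∧ σ (fv X k) = false) ∧
      σ (cv X k i.castSucc) = σ (cv X k i.succ) := by
  simp [delta3, satEqTerm, satLit]

/-- Correctness of the reduction from Pos-1-In-3-SAT: the instance has an
assignment setting exactly one variable per triple to true iff there is a
consistent subset of `Δ` entailing `α`. -/
theorem stmt_12 {X : Type} [DecidableEq X] (k : ℕ) (hk : 1 ≤ k)
    (x y z : Fin k → X) :
    (∃ σ : X → Bool, ∀ i : Fin k,
        (σ (x i) = true ∧ σ (y i) = false ∧ σ (z i) = false) ∨
        (σ (x i) = false ∧ σ (y i) = true ∧ σ (z i) = false) ∨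
        (σ (x i) = false ∧ σ (y i) = false ∧ σ (z i) = true)) ↔
    (∃ Φ : Set (EqTerm (RedVar X k)), Φ ⊆ redDelta x y z ∧
        ConsistentE Φ ∧ EntailsE Φ (redAlpha X k)) := by
  constructor
  · rintro ⟨σ, h⟩
    refine ⟨{φ | ∃ i, (σ (x i) = true ∧ φ = delta1 x y z i) ∨
        (σ (y i) = true ∧ φ = delta2 x y z i) ∨
        (σ (z i) = true ∧ φ = delta3 x y z i)}, ?_, ?_, ?_⟩
    · rintro φ ⟨i, hφ⟩
      exact ⟨i, by tauto⟩
    · refine ⟨fun w => match w with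
        | .inl v => σ v
        | .inr (.inl j) => decide (j = 0)
        | .inr (.inr _) => true, ?_⟩
      rintro φ ⟨i, hφ⟩
      rcases h i with ⟨hx, hy, hz⟩ | ⟨hx, hy, hz⟩ | ⟨hx, hy, hz⟩ <;>
        rcases hφ with ⟨h1, rfl⟩ | ⟨h1, rfl⟩ | ⟨h1, rfl⟩ <;>
        simp_all [sat_delta1_iff, sat_delta2_iff, sat_delta3_iff, tv, fv, cv]
    · intro τ hτ
      have hmem : ∀ i : Fin k,
          τ (cv X k i.castSucc) = τ (cv X k i.succ) ∧
          τ (tv X k) = true ∧ τ (fv X k) = false := by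
        intro i
        rcases h i with ⟨hx, hy, hz⟩ | ⟨hx, hy, hz⟩ | ⟨hx, hy, hz⟩
        · have hs := (sat_delta1_iff x y z τ i).1 (hτ _ ⟨i, Or.inl ⟨hx, rfl⟩⟩)
          exact ⟨hs.2, hs.1.2.2.2⟩
        · have hs := (sat_delta2_iff x y z τ i).1 (hτ _ ⟨i, Or.inr (Or.inl ⟨hy, rfl⟩)⟩)
          exact ⟨hs.2, hs.1.2.2.2⟩
        · have hs := (sat_delta3_iff x y z τ i).1 (hτ _ ⟨i, Or.inr (Or.inr ⟨hz, rfl⟩)⟩)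
          exact ⟨hs.2, hs.1.2.2.2⟩
      obtain ⟨_, ht, hf⟩ := hmem ⟨0, hk⟩
      refine ⟨?_, ?_⟩
      · intro l hl
        simp only [redAlpha, Finset.mem_insert, Finset.mem_singleton] at hl
        rcases hl with rfl | rfl
        · exact ht
        · exact hf
      · intro p hp
        simp only [redAlpha, Finset.mem_singleton] at hp
        subst hp
        have chain : ∀ j : Fin (k + 1), τ (cv X k 0) = τ (cv X k j) := by
          intro j
          induction j using Fin.induction with
          | zero => rfl
          | succ i ih => exact ih.trans (hmem i).1
        exact chain (Fin.last k)
  · rintro ⟨Φ, hsub, ⟨σ₀, hσ₀⟩, hent⟩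
    have key : ∀ i : Fin k,
        delta1 x y z i ∈ Φ ∨ delta2 x y z i ∈ Φ ∨ delta3 x y z i ∈ Φ := by
      intro i
      by_contra hc
      push_neg at hc
      obtain ⟨h1, h2, h3⟩ := hc
      set τ : RedVar X k → Bool := fun w => match w with
        | .inl v => σ₀ (.inl v)
        | .inr (.inl j) => σ₀ (.inr (.inl j))
        | .inr (.inr m) => decide (m.val ≤ i.val) with hτdef
      have hagree : ∀ v : X, τ (Sum.inl v) = σ₀ (Sum.inl v) := fun _ => rfl
      have htf : τ (tv X k) = σ₀ (tv X k) ∧ τ (fv X k) = σ₀ (fv X k) := ⟨rfl, rfl⟩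
      have hcv : ∀ j : Fin (k + 1), τ (cv X k j) = decide (j.val ≤ i.val) :=
        fun _ => rfl
      have hτ : ∀ φ ∈ Φ, satEqTerm τ φ := by
        intro φ hφ
        obtain ⟨i', hi'⟩ := hsub hφ
        have hne : i' ≠ i := by
          rintro rfl
          rcases hi' with rfl | rfl | rfl
          exacts [h1 hφ, h2 hφ, h3 hφ]
        have hval : (i' : ℕ) ≠ (i : ℕ) := fun hh => hne (Fin.val_injective hh)
        have hσφ := hσ₀ φ hφ
        have heq : τ (cv X k i'.castSucc) = τ (cv X k i'.succ) := by
          rw [hcv, hcv, decide_eq_decide]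
          simp only [Fin.coe_castSucc, Fin.val_succ]
          omega
        rcases hi' with rfl | rfl | rfl
        · rw [sat_delta1_iff] at hσφ ⊢
          rw [hagree, hagree, hagree, htf.1, htf.2]
          exact ⟨hσφ.1, heq⟩
        · rw [sat_delta2_iff] at hσφ ⊢
          rw [hagree, hagree, hagree, htf.1, htf.2]
          exact ⟨hσφ.1, heq⟩
        · rw [sat_delta3_iff] at hσφ ⊢
          rw [hagree, hagree, hagree, htf.1, htf.2]
          exact ⟨hσφ.1, heq⟩
      have hα := hent τ hτ
      have hchain := hα.2 (cv X k 0, cv X k (Fin.last k)) (by simp [redAlpha])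
      rw [hcv, hcv] at hchain
      simp only [decide_eq_decide, Fin.val_last, Fin.val_zero] at hchain
      have hi := i.isLt
      have h2 : k ≤ (i : ℕ) := of_decide_eq_true (hchain.symm.trans (decide_eq_true (Nat.zero_le _)))
      omega
    refine ⟨fun v => σ₀ (Sum.inl v), fun i => ?_⟩
    rcases key i with hm | hm | hm
    · have hs := ((sat_delta1_iff x y z σ₀ i).1 (hσ₀ _ hm)).1
      exact Or.inl ⟨hs.1, hs.2.1, hs.2.2.1⟩
    · have hs := ((sat_delta2_iff x y z σ₀ i).1 (hσ₀ _ hm)).1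
      exact Or.inr (Or.inl ⟨hs.1, hs.2.1, hs.2.2.1⟩)
    · have hs := ((sat_delta3_iff x y z σ₀ i).1 (hσ₀ _ hm)).1
      exact Or.inr (Or.inr ⟨hs.1, hs.2.1, hs.2.2.1⟩)
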